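/- Let z ∈ ℂ₊ and let (φ, φ̃) be an admissible solution at z. Set ζ̃(f) = σ²(𝛄⋆φ̃)(f), F₁(f) = T⁻¹ tr[S(f,z)S(f,z)*] and F₂(f) = T⁻¹ tr[S̃(f,z)(𝐀*𝐀)(f)S̃(f,z)*]/|1+ζ̃(f)|². Then for every f ∈ [0,1]: Im φ(f) > 0 and F₁(f) > 0, and there exist constants C > 0 and C′ > 0 not depending on f such that 0 < Im(z φ̃(f)) < C and F₂(f) ≥ C′ · tr (𝐀*𝐀)(f) for every f ∈ [0,1]. -/

import Mathlib

open MeasureTheory Matrix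

noncomputable section

/-- Spectral norm (l2 operator norm) of a complex matrix. -/
def specNorm {m n : Type*} [Fintype m] [Fintype n] [DecidableEq n]
    (M : Matrix m n ℂ) : ℝ :=
  ‖(Matrix.toEuclideanLin.trans LinearMap.toContinuousLinearMap) M‖

/-- The Fourier transform `𝐀(f) = ∑_{k=-L}^{L} e^{2πikf} A(k)`. -/
def fA (N T : ℕ) (L : ℕ) (A : ℤ → Matrix (Fin N) (Fin T) ℂ) (f : ℝ) :
    Matrix (Fin N) (Fin T) ℂ :=
  ∑ k ∈ Finset.Icc (-(L:ℤ)) (L:ℤ),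
    Complex.exp (2 * Real.pi * Complex.I * (k : ℂ) * (f : ℂ)) • A k

/-- `(𝛄 ⋆ ψ)(f) = ∫₀¹ 𝛄(f-u) ψ(u) du`. -/
def convP (bγ : ℝ → ℝ) (ψ : ℝ → ℂ) (f : ℝ) : ℂ :=
  ∫ u in (0:ℝ)..1, (bγ (f - u) : ℂ) * ψ u

/-- `(𝛄(-·) ⋆ ψ)(f) = ∫₀¹ 𝛄(u-f) ψ(u) du`. -/
def convM (bγ : ℝ → ℝ) (ψ : ℝ → ℂ) (f : ℝ) : ℂ :=
  ∫ u in (0:ℝ)..1, (bγ (u - f) : ℂ) * ψ u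

/-- The matrix `S(f,z)`. -/
def Smat (N T L : ℕ) (σ2 : ℝ) (bγ : ℝ → ℝ) (A : ℤ → Matrix (Fin N) (Fin T) ℂ)
    (φ φt : ℝ → ℂ) (z : ℂ) (f : ℝ) : Matrix (Fin N) (Fin N) ℂ :=
  ((-z * (1 + (σ2 : ℂ) * convP bγ φt f)) • (1 : Matrix (Fin N) (Fin N) ℂ)
    + (1 + (σ2 : ℂ) * convM bγ φ f)⁻¹ • (fA N T L A f * (fA N T L A f)ᴴ))⁻¹

/-- The matrix `S̃(f,z)`. -/
def StMat (N T L : ℕ) (σ2 : ℝ) (bγ : ℝ → ℝ) (A : ℤ → Matrix (Fin N) (Fin T) ℂ)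
    (φ φt : ℝ → ℂ) (z : ℂ) (f : ℝ) : Matrix (Fin T) (Fin T) ℂ :=
  ((-z * (1 + (σ2 : ℂ) * convM bγ φ f)) • (1 : Matrix (Fin T) (Fin T) ℂ)
    + (1 + (σ2 : ℂ) * convP bγ φt f)⁻¹ • ((fA N T L A f)ᴴ * fA N T L A f))⁻¹

/-- A pair `(φ, φ̃)` of integrable functions is an admissible solution at `z`. -/
def IsAdmissible (N T L : ℕ) (σ2 : ℝ) (bγ : ℝ → ℝ)
    (A : ℤ → Matrix (Fin N) (Fin T) ℂ) (z : ℂ) (φ φt : ℝ → ℂ) : Prop :=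
  IntegrableOn φ (Set.Icc (0:ℝ) 1) ∧ IntegrableOn φt (Set.Icc (0:ℝ) 1) ∧
  (∀ f ∈ Set.Icc (0:ℝ) 1,
    0 ≤ (φ f).im ∧ 0 ≤ (φt f).im ∧ 0 ≤ (z * φ f).im ∧ 0 ≤ (z * φt f).im) ∧
  (∀ f ∈ Set.Icc (0:ℝ) 1,
    φ f = (T : ℂ)⁻¹ * (Smat N T L σ2 bγ A φ φt z f).trace ∧
    φt f = (T : ℂ)⁻¹ * (StMat N T L σ2 bγ A φ φt z f).trace)

section Kernels

variable (N T L : ℕ) (σ2 : ℝ) (bγ : ℝ → ℝ) (A : ℤ → Matrix (Fin N) (Fin T) ℂ)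
  (φ φt : ℝ → ℂ) (z : ℂ)

/-- `ζ(f) = σ²(𝛄(-·)⋆φ)(f)`. -/
def zeta (f : ℝ) : ℂ := (σ2 : ℂ) * convM bγ φ f

/-- `ζ̃(f) = σ²(𝛄⋆φ̃)(f)`. -/
def zetat (f : ℝ) : ℂ := (σ2 : ℂ) * convP bγ φt f

def K11 (f u : ℝ) : ℝ :=
  σ2 * bγ (u - f) *
    ((T : ℝ)⁻¹ * ((Smat N T L σ2 bγ A φ φt z f * (fA N T L A f * (fA N T L A f)ᴴ)
        * (Smat N T L σ2 bγ A φ φt z f)ᴴ).trace.re)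
      / ‖1 + zeta σ2 bγ φ f‖ ^ 2)

def K12 (f u : ℝ) : ℝ :=
  σ2 * bγ (f - u) *
    ((T : ℝ)⁻¹ * ((Smat N T L σ2 bγ A φ φt z f
        * (Smat N T L σ2 bγ A φ φt z f)ᴴ).trace.re))

def K21 (f u : ℝ) : ℝ :=
  σ2 * bγ (u - f) * (‖z‖ ^ 2 *
    ((T : ℝ)⁻¹ * ((StMat N T L σ2 bγ A φ φt z f
        * (StMat N T L σ2 bγ A φ φt z f)ᴴ).trace.re)))

def K22 (f u : ℝ) : ℝ :=
  σ2 * bγ (f - u) *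
    ((T : ℝ)⁻¹ * ((StMat N T L σ2 bγ A φ φt z f * ((fA N T L A f)ᴴ * fA N T L A f)
        * (StMat N T L σ2 bγ A φ φt z f)ᴴ).trace.re)
      / ‖1 + zetat σ2 bγ φt f‖ ^ 2)

def F1 (f : ℝ) : ℝ :=
  (T : ℝ)⁻¹ * ((Smat N T L σ2 bγ A φ φt z f
      * (Smat N T L σ2 bγ A φ φt z f)ᴴ).trace.re)

def F2 (f : ℝ) : ℝ :=
  (T : ℝ)⁻¹ * ((StMat N T L σ2 bγ A φ φt z f * ((fA N T L A f)ᴴ * fA N T L A f)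
      * (StMat N T L σ2 bγ A φ φt z f)ᴴ).trace.re)
    / ‖1 + zetat σ2 bγ φt f‖ ^ 2

end Kernels

namespace BornesAux

open Complex Finset intervalIntegral

variable {m n p : Type*} [Fintype m] [Fintype n] [Fintype p]

/-- sum of squared moduli of a vector -/
def n2v (v : m → ℂ) : ℝ := ∑ i, Complex.normSq (v i)

/-- hermitian inner product -/
def ipv (v w : m → ℂ) : ℂ := ∑ i, (starRingEnd ℂ) (v i) * w i

/-- squared Frobenius norm -/
def fr2 (M : Matrix m n ℂ) : ℝ := ∑ i, ∑ j, Complex.normSq (M i j)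

/-- entrywise 1-norm -/
def e1 (M : Matrix m n ℂ) : ℝ := ∑ i, ∑ j, ‖M i j‖

lemma n2v_nonneg (v : m → ℂ) : 0 ≤ n2v v :=
  Finset.sum_nonneg fun _ _ => Complex.normSq_nonneg _

lemma n2v_eq_zero {v : m → ℂ} (h : n2v v = 0) : v = 0 := by
  funext i
  have := (Finset.sum_eq_zero_iff_of_nonneg
    (fun i _ => Complex.normSq_nonneg (v i))).1 h i (Finset.mem_univ i)
  simpa [Complex.normSq_eq_zero] using this

lemma fr2_nonneg (M : Matrix m n ℂ) : 0 ≤ fr2 M :=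
  Finset.sum_nonneg fun _ _ => Finset.sum_nonneg fun _ _ => Complex.normSq_nonneg _

lemma e1_nonneg (M : Matrix m n ℂ) : 0 ≤ e1 M :=
  Finset.sum_nonneg fun _ _ => Finset.sum_nonneg fun _ _ => norm_nonneg _

lemma ipv_self (v : m → ℂ) : ipv v v = (n2v v : ℂ) := by
  simp only [ipv, n2v]; push_cast
  exact Finset.sum_congr rfl fun i _ => by rw [mul_comm, Complex.mul_conj]

lemma n2v_single [DecidableEq m] (j : m) : n2v (Pi.single j (1:ℂ)) = 1 := by
  simp [n2v, Pi.single_apply, apply_ite Complex.normSq]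

lemma ipv_mulVec_conjTranspose (C : Matrix m n ℂ) (v : m → ℂ) (w : n → ℂ) :
    ipv v (C.mulVec w) = ipv (Cᴴ.mulVec v) w := by
  simp only [ipv, Matrix.mulVec, dotProduct, conjTranspose_apply, Finset.mul_sum,
    Finset.sum_mul, map_sum, _root_.map_mul, Complex.star_def, Complex.conj_conj]
  rw [Finset.sum_comm]
  exact Finset.sum_congr rfl fun j _ => Finset.sum_congr rfl fun i _ => by ring

lemma ipv_form [DecidableEq m] (c d : ℂ) (C : Matrix m n ℂ) (v : m → ℂ) :
    ipv v ((c • (1 : Matrix m m ℂ) + d • (C * Cᴴ)).mulVec v)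
      = c * (n2v v : ℂ) + d * (n2v (Cᴴ.mulVec v) : ℂ) := by
  rw [Matrix.add_mulVec, Matrix.smul_mulVec, Matrix.smul_mulVec, Matrix.one_mulVec,
    ← Matrix.mulVec_mulVec]
  have hadd : ∀ w x : m → ℂ, ipv v (w + x) = ipv v w + ipv v x := fun w x => by
    simp [ipv, mul_add, Finset.sum_add_distrib]
  have hsmul : ∀ (a : ℂ) (w : m → ℂ), ipv v (a • w) = a * ipv v w := fun a w => by
    simp only [ipv, Pi.smul_apply, smul_eq_mul, Finset.mul_sum]
    exact Finset.sum_congr rfl fun i _ => by ring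
  rw [hadd, hsmul, hsmul, ipv_self, ipv_mulVec_conjTranspose, ipv_self]

lemma ipv_abs_sq_le (v w : m → ℂ) :
    ‖ipv v w‖ ^ 2 ≤ n2v v * n2v w := by
  have h1 : ‖ipv v w‖ ≤ ∑ i, ‖v i‖ * ‖w i‖ := by
    refine (norm_sum_le _ _).trans (le_of_eq ?_)
    exact Finset.sum_congr rfl fun i _ => by simp [_root_.map_mul]
  have h2 := Finset.sum_mul_sq_le_sq_mul_sq Finset.univ
    (fun i => ‖v i‖) (fun i => ‖w i‖)
  calc ‖ipv v w‖ ^ 2 ≤ (∑ i, ‖v i‖ * ‖w i‖) ^ 2 := by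
        apply pow_le_pow_left₀ (norm_nonneg _) h1
    _ ≤ (∑ i, ‖v i‖ ^ 2) * ∑ i, ‖w i‖ ^ 2 := h2
    _ = n2v v * n2v w := by simp [n2v, Complex.sq_norm]

section inv
variable [DecidableEq m]

lemma isUnit_det_of_dissipative {M : Matrix m m ℂ} {ε : ℝ} (hε : 0 < ε)
    (h : ∀ v, (ipv v (M.mulVec v)).im ≤ -ε * n2v v) : IsUnit M.det := by
  rw [isUnit_iff_ne_zero]
  intro hdet
  obtain ⟨v, hv0, hv⟩ := (Matrix.exists_mulVec_eq_zero_iff).2 hdet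
  have h0 := h v
  rw [hv] at h0
  simp only [ipv, Pi.zero_apply, mul_zero, Finset.sum_const_zero, Complex.zero_im] at h0
  have hn := n2v_nonneg v
  have : n2v v = 0 := by nlinarith
  exact hv0 (n2v_eq_zero this)

omit [DecidableEq m] in
lemma n2v_mulVec_ge {M : Matrix m m ℂ} {ε : ℝ} (hε : 0 < ε)
    (h : ∀ v, (ipv v (M.mulVec v)).im ≤ -ε * n2v v) (v : m → ℂ) :
    ε ^ 2 * n2v v ≤ n2v (M.mulVec v) := by
  rcases eq_or_lt_of_le (n2v_nonneg v) with h0 | hpos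
  · rw [← h0, mul_zero]; exact n2v_nonneg _
  · have h1 : ε * n2v v ≤ ‖ipv v (M.mulVec v)‖ := by
      have h2 := h v
      calc ε * n2v v ≤ -(ipv v (M.mulVec v)).im := by linarith
        _ ≤ |(ipv v (M.mulVec v)).im| := neg_le_abs _
        _ ≤ ‖ipv v (M.mulVec v)‖ := Complex.abs_im_le_norm _
    have h2 := ipv_abs_sq_le v (M.mulVec v)
    have h3 : (ε * n2v v) ^ 2 ≤ n2v v * n2v (M.mulVec v) := by
      refine le_trans ?_ h2
      exact pow_le_pow_left₀ (by positivity) h1 2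
    nlinarith

lemma n2v_inv_le {M : Matrix m m ℂ} (h : IsUnit M.det) {ε : ℝ}
    (hlow : ∀ v, ε ^ 2 * n2v v ≤ n2v (M.mulVec v)) (w : m → ℂ) :
    ε ^ 2 * n2v (M⁻¹.mulVec w) ≤ n2v w := by
  have := hlow (M⁻¹.mulVec w)
  rwa [Matrix.mulVec_mulVec, Matrix.mul_nonsing_inv _ h, Matrix.one_mulVec] at this

lemma n2v_inv_ge {M : Matrix m m ℂ} (h : IsUnit M.det) {B : ℝ}
    (hup : ∀ v, n2v (M.mulVec v) ≤ B ^ 2 * n2v v) (w : m → ℂ) :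
    n2v w ≤ B ^ 2 * n2v (M⁻¹.mulVec w) := by
  have := hup (M⁻¹.mulVec w)
  rwa [Matrix.mulVec_mulVec, Matrix.mul_nonsing_inv _ h, Matrix.one_mulVec] at this

lemma abs_entry_le {M : Matrix m m ℂ} {ε : ℝ} (hε : 0 < ε)
    (h : ∀ w, ε ^ 2 * n2v (M.mulVec w) ≤ n2v w) (i j : m) :
    ‖M i j‖ ≤ 1 / ε := by
  have h1 := h (Pi.single j 1)
  rw [n2v_single] at h1
  have h2 : Complex.normSq (M i j) ≤ n2v (M.mulVec (Pi.single j 1)) := by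
    rw [Matrix.mulVec_single]
    simp only [n2v, mul_one]
    have := Finset.single_le_sum (f := fun x => Complex.normSq (M x j))
      (fun k _ => Complex.normSq_nonneg (M k j)) (Finset.mem_univ i)
    simpa using this
  have h3 : ‖M i j‖ ^ 2 ≤ (1 / ε) ^ 2 := by
    rw [Complex.sq_norm, div_pow, one_pow, le_div_iff₀ (by positivity)]
    nlinarith
  calc ‖M i j‖ = Real.sqrt (‖M i j‖ ^ 2) :=
        (Real.sqrt_sq (norm_nonneg _)).symm
    _ ≤ Real.sqrt ((1 / ε) ^ 2) := Real.sqrt_le_sqrt h3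
    _ = 1 / ε := Real.sqrt_sq (by positivity)

lemma abs_trace_le {M : Matrix m m ℂ} {ε : ℝ} (hε : 0 < ε)
    (h : ∀ w, ε ^ 2 * n2v (M.mulVec w) ≤ n2v w) :
    ‖M.trace‖ ≤ (Fintype.card m : ℝ) / ε := by
  calc ‖M.trace‖ ≤ ∑ i, ‖M i i‖ := norm_sum_le _ _
    _ ≤ ∑ _i : m, 1 / ε := Finset.sum_le_sum fun i _ => abs_entry_le hε h i i
    _ = (Fintype.card m : ℝ) / ε := by
        rw [Finset.sum_const, Fintype.card, nsmul_eq_mul]; ring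

end inv

lemma n2v_mulVec_le (M : Matrix m n ℂ) (v : n → ℂ) :
    n2v (M.mulVec v) ≤ e1 M ^ 2 * n2v v := by
  have hv : ∀ j, ‖v j‖ ≤ Real.sqrt (n2v v) := fun j => by
    rw [← Real.sqrt_sq (norm_nonneg (v j))]
    refine Real.sqrt_le_sqrt ?_
    rw [Complex.sq_norm]
    exact Finset.single_le_sum (f := fun x => Complex.normSq (v x))
      (fun k _ => Complex.normSq_nonneg _) (Finset.mem_univ j)
  have hrow : ∀ i, ‖M.mulVec v i‖
      ≤ (∑ j, ‖M i j‖) * Real.sqrt (n2v v) := fun i => by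
    calc ‖M.mulVec v i‖ ≤ ∑ j, ‖M i j‖ * ‖v j‖ := by
          refine (norm_sum_le _ _).trans (le_of_eq ?_)
          exact Finset.sum_congr rfl fun j _ => by simp [_root_.map_mul]
      _ ≤ ∑ j, ‖M i j‖ * Real.sqrt (n2v v) :=
          Finset.sum_le_sum fun j _ =>
            mul_le_mul_of_nonneg_left (hv j) (norm_nonneg _)
      _ = (∑ j, ‖M i j‖) * Real.sqrt (n2v v) := by rw [Finset.sum_mul]
  calc n2v (M.mulVec v) = ∑ i, ‖M.mulVec v i‖ ^ 2 := by
        simp [n2v, Complex.sq_norm]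
    _ ≤ ∑ i, ((∑ j, ‖M i j‖) * Real.sqrt (n2v v)) ^ 2 :=
        Finset.sum_le_sum fun i _ => pow_le_pow_left₀ (norm_nonneg _) (hrow i) 2
    _ = (∑ i, (∑ j, ‖M i j‖) ^ 2) * n2v v := by
        rw [Finset.sum_mul]
        refine Finset.sum_congr rfl fun i _ => ?_
        rw [mul_pow, Real.sq_sqrt (n2v_nonneg v)]
    _ ≤ (∑ i, ∑ j, ‖M i j‖) ^ 2 * n2v v := by
        refine mul_le_mul_of_nonneg_right ?_ (n2v_nonneg v)
        exact Finset.sum_sq_le_sq_sum_of_nonneg fun i _ =>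
          Finset.sum_nonneg fun j _ => norm_nonneg _
    _ = e1 M ^ 2 * n2v v := rfl

lemma e1_smul (c : ℂ) (M : Matrix m n ℂ) : e1 (c • M) = ‖c‖ * e1 M := by
  rw [e1, e1, Finset.mul_sum]
  refine Finset.sum_congr rfl fun i _ => ?_
  rw [Finset.mul_sum]
  refine Finset.sum_congr rfl fun j _ => ?_
  rw [Matrix.smul_apply, smul_eq_mul, norm_mul]

lemma e1_one [DecidableEq m] : e1 (1 : Matrix m m ℂ) = (Fintype.card m : ℝ) := by
  rw [e1]
  have h : ∀ i : m, (∑ j, ‖(1 : Matrix m m ℂ) i j‖) = 1 := fun i => by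
    rw [Finset.sum_eq_single i]
    · simp [Matrix.one_apply_eq]
    · intro b _ hb; simp [Matrix.one_apply_ne (Ne.symm hb)]
    · intro h; exact absurd (Finset.mem_univ i) h
  simp [h]

lemma e1_add_le (M N : Matrix m n ℂ) : e1 (M + N) ≤ e1 M + e1 N := by
  simp only [e1, ← Finset.sum_add_distrib]
  refine Finset.sum_le_sum fun i _ => Finset.sum_le_sum fun j _ => ?_
  simpa using norm_add_le (M i j) (N i j)

lemma e1_zero : e1 (0 : Matrix m n ℂ) = 0 := by simp [e1]

lemma e1_sum_le {ι : Type*} (s : Finset ι) (M : ι → Matrix m n ℂ) :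
    e1 (∑ k ∈ s, M k) ≤ ∑ k ∈ s, e1 (M k) := by
  classical
  induction s using Finset.induction with
  | empty => simp [e1_zero]
  | insert _ _ hx ih =>
    rw [Finset.sum_insert hx, Finset.sum_insert hx]
    exact (e1_add_le _ _).trans (by linarith)

lemma e1_conjTranspose (M : Matrix m n ℂ) : e1 Mᴴ = e1 M := by
  rw [e1, Finset.sum_comm]
  simp [e1, Matrix.conjTranspose_apply]

lemma e1_mul_le (M : Matrix m n ℂ) (P : Matrix n p ℂ) : e1 (M * P) ≤ e1 M * e1 P := by
  have h1 : e1 (M * P) ≤ ∑ j : n, (∑ i, ‖M i j‖) * (∑ k, ‖P j k‖) := by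
    simp only [e1, Matrix.mul_apply]
    calc ∑ i, ∑ k, ‖∑ j, M i j * P j k‖
        ≤ ∑ i, ∑ k, ∑ j, ‖M i j‖ * ‖P j k‖ := by
          refine Finset.sum_le_sum fun i _ => Finset.sum_le_sum fun k _ => ?_
          refine (norm_sum_le _ _).trans (le_of_eq ?_)
          exact Finset.sum_congr rfl fun j _ => by simp [_root_.map_mul]
      _ = ∑ i, ∑ j, ∑ k, ‖M i j‖ * ‖P j k‖ :=
          Finset.sum_congr rfl fun i _ => Finset.sum_comm
      _ = ∑ j : n, ∑ i, ∑ k, ‖M i j‖ * ‖P j k‖ := Finset.sum_comm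
      _ = ∑ j : n, (∑ i, ‖M i j‖) * (∑ k, ‖P j k‖) := by
          refine Finset.sum_congr rfl fun j _ => ?_
          rw [Finset.sum_mul]
          exact Finset.sum_congr rfl fun i _ => by rw [Finset.mul_sum]
  refine h1.trans ?_
  calc ∑ j : n, (∑ i, ‖M i j‖) * (∑ k, ‖P j k‖)
      ≤ ∑ j : n, (∑ i, ‖M i j‖) * e1 P := by
        refine Finset.sum_le_sum fun j _ => ?_
        refine mul_le_mul_of_nonneg_left ?_
          (Finset.sum_nonneg fun i _ => norm_nonneg _)
        exact Finset.single_le_sum (f := fun x => ∑ k, ‖P x k‖)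
          (fun x _ => Finset.sum_nonneg fun k _ => norm_nonneg _) (Finset.mem_univ j)
    _ = (∑ j : n, ∑ i, ‖M i j‖) * e1 P := by rw [Finset.sum_mul]
    _ = e1 M * e1 P := by
        rw [show (∑ j : n, ∑ i, ‖M i j‖) = e1 M from Finset.sum_comm]

lemma trace_mul_conjTranspose (M : Matrix m n ℂ) : (M * Mᴴ).trace = (fr2 M : ℂ) := by
  simp only [Matrix.trace, Matrix.diag, Matrix.mul_apply, Matrix.conjTranspose_apply, fr2]
  push_cast
  exact Finset.sum_congr rfl fun i _ => Finset.sum_congr rfl fun j _ => by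
    rw [Complex.star_def, Complex.mul_conj]

lemma trace_conjTranspose_mul (M : Matrix m n ℂ) : (Mᴴ * M).trace = (fr2 M : ℂ) := by
  simp only [Matrix.trace, Matrix.diag, Matrix.mul_apply, Matrix.conjTranspose_apply, fr2]
  push_cast
  rw [Finset.sum_comm]
  exact Finset.sum_congr rfl fun i _ => Finset.sum_congr rfl fun j _ => by
    rw [Complex.star_def, mul_comm, Complex.mul_conj]

lemma fr2_conjTranspose (M : Matrix m n ℂ) : fr2 Mᴴ = fr2 M := by
  rw [fr2, Finset.sum_comm]
  simp [fr2, Matrix.conjTranspose_apply]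

lemma fr2_eq_sum_cols [DecidableEq n] (M : Matrix m n ℂ) :
    fr2 M = ∑ j, n2v (M.mulVec (Pi.single j 1)) := by
  rw [fr2, Finset.sum_comm]
  refine Finset.sum_congr rfl fun j _ => ?_
  rw [Matrix.mulVec_single]
  simp [n2v]

lemma card_le_fr2_inv [DecidableEq m] {M : Matrix m m ℂ} {B : ℝ}
    (hineq : ∀ w, n2v w ≤ B ^ 2 * n2v (M⁻¹.mulVec w)) :
    (Fintype.card m : ℝ) ≤ B ^ 2 * fr2 M⁻¹ := by
  rw [fr2_eq_sum_cols, Finset.mul_sum]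
  calc (Fintype.card m : ℝ) = ∑ j : m, n2v (Pi.single j (1:ℂ)) := by simp [n2v_single]
    _ ≤ ∑ j : m, B ^ 2 * n2v (M⁻¹.mulVec (Pi.single j 1)) :=
        Finset.sum_le_sum fun j _ => hineq _

lemma fr2_le_fr2_inv_mul [DecidableEq m] [DecidableEq p] {M : Matrix m m ℂ} {B : ℝ}
    (hineq : ∀ w, n2v w ≤ B ^ 2 * n2v (M⁻¹.mulVec w)) (C : Matrix m p ℂ) :
    fr2 C ≤ B ^ 2 * fr2 (M⁻¹ * C) := by
  rw [fr2_eq_sum_cols, fr2_eq_sum_cols (M⁻¹ * C), Finset.mul_sum]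
  refine Finset.sum_le_sum fun j _ => ?_
  rw [← Matrix.mulVec_mulVec]
  exact hineq _

/-- Key trace-imaginary-part identity. -/
lemma key_im [DecidableEq m] (z c d : ℂ) (C : Matrix m p ℂ)
    (h : IsUnit (c • (1 : Matrix m m ℂ) + d • (C * Cᴴ)).det) :
    (z * ((c • (1 : Matrix m m ℂ) + d • (C * Cᴴ))⁻¹).trace).im
      = (z * (starRingEnd ℂ) c).im * fr2 (c • (1 : Matrix m m ℂ) + d • (C * Cᴴ))⁻¹
        + (z * (starRingEnd ℂ) d).im
          * fr2 ((c • (1 : Matrix m m ℂ) + d • (C * Cᴴ))⁻¹ * C) := by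
  set M : Matrix m m ℂ := c • (1 : Matrix m m ℂ) + d • (C * Cᴴ) with hM
  set S : Matrix m m ℂ := M⁻¹ with hS
  have hSM : S * M = 1 := Matrix.nonsing_inv_mul M h
  have hMH : Mᴴ = (starRingEnd ℂ) c • (1 : Matrix m m ℂ) + (starRingEnd ℂ) d • (C * Cᴴ) := by
    rw [hM]
    simp [Matrix.conjTranspose_add, Matrix.conjTranspose_smul, Matrix.conjTranspose_mul,
      Matrix.conjTranspose_conjTranspose, Matrix.conjTranspose_one]
  have hMHS : Mᴴ * Sᴴ = 1 := by rw [← Matrix.conjTranspose_mul, hSM, Matrix.conjTranspose_one]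
  have hid : z • S - (starRingEnd ℂ) z • Sᴴ = S * (z • Mᴴ - (starRingEnd ℂ) z • M) * Sᴴ := by
    rw [Matrix.mul_sub, Matrix.sub_mul, Matrix.mul_smul, Matrix.mul_smul, Matrix.smul_mul,
      Matrix.smul_mul, Matrix.mul_assoc, hMHS, Matrix.mul_one, hSM, Matrix.one_mul]
  have hexp : S * (z • Mᴴ - (starRingEnd ℂ) z • M) * Sᴴ
      = (z * (starRingEnd ℂ) c - (starRingEnd ℂ) (z * (starRingEnd ℂ) c)) • (S * Sᴴ)
        + (z * (starRingEnd ℂ) d - (starRingEnd ℂ) (z * (starRingEnd ℂ) d))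
          • ((S * C) * (S * C)ᴴ) := by
    have hscal : z • Mᴴ - (starRingEnd ℂ) z • M
        = (z * (starRingEnd ℂ) c - (starRingEnd ℂ) z * c) • (1 : Matrix m m ℂ)
          + (z * (starRingEnd ℂ) d - (starRingEnd ℂ) z * d) • (C * Cᴴ) := by
      rw [hMH, hM]
      rw [smul_add, smul_add, smul_smul, smul_smul, smul_smul, smul_smul, sub_smul, sub_smul]
      abel
    rw [hscal]
    have e1 : (starRingEnd ℂ) (z * (starRingEnd ℂ) c) = (starRingEnd ℂ) z * c := by
      rw [_root_.map_mul, Complex.conj_conj]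
    have e2 : (starRingEnd ℂ) (z * (starRingEnd ℂ) d) = (starRingEnd ℂ) z * d := by
      rw [_root_.map_mul, Complex.conj_conj]
    rw [e1, e2]
    rw [Matrix.mul_add, Matrix.add_mul]
    congr 1
    · rw [Matrix.mul_smul, Matrix.smul_mul, Matrix.mul_one]
    · rw [Matrix.mul_smul, Matrix.smul_mul]
      congr 1
      rw [Matrix.conjTranspose_mul, ← Matrix.mul_assoc, ← Matrix.mul_assoc]
  have htr := congrArg Matrix.trace (hid.trans hexp)
  rw [Matrix.trace_sub, Matrix.trace_smul, Matrix.trace_smul, Matrix.trace_add,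
    Matrix.trace_smul, Matrix.trace_smul, trace_mul_conjTranspose, trace_mul_conjTranspose,
    Matrix.trace_conjTranspose] at htr
  simp only [smul_eq_mul] at htr
  have him := congrArg Complex.im htr
  have hR : ∀ (u : ℂ) (r : ℝ), ((u - (starRingEnd ℂ) u) * (r : ℂ)).im = 2 * u.im * r :=
    fun u r => by
      simp only [Complex.mul_im, Complex.sub_im, Complex.sub_re, Complex.conj_im,
        Complex.conj_re, Complex.ofReal_re, Complex.ofReal_im]
      ring
  have hL : (z * S.trace - (starRingEnd ℂ) z * star S.trace).im = 2 * (z * S.trace).im := by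
    rw [Complex.star_def, ← _root_.map_mul]
    simp only [Complex.sub_im, Complex.conj_im]
    ring
  rw [Complex.add_im, hR (z * (starRingEnd ℂ) c) (fr2 S),
    hR (z * (starRingEnd ℂ) d) (fr2 (S * C)), hL] at him
  linarith

/-- dissipativity master lemma -/
lemma master [DecidableEq m] {c d : ℂ} {C : Matrix m p ℂ} {ε : ℝ}
    (hε : 0 < ε) (hc : c.im ≤ -ε) (hd : d.im ≤ 0) :
    IsUnit (c • (1 : Matrix m m ℂ) + d • (C * Cᴴ)).det ∧
      (∀ w, ε ^ 2 * n2v ((c • (1 : Matrix m m ℂ) + d • (C * Cᴴ))⁻¹.mulVec w) ≤ n2v w) := by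
  have hdiss : ∀ v, (ipv v ((c • (1 : Matrix m m ℂ) + d • (C * Cᴴ)).mulVec v)).im
      ≤ -ε * n2v v := fun v => by
    rw [ipv_form]
    simp only [Complex.add_im, Complex.mul_im, Complex.ofReal_re, Complex.ofReal_im,
      mul_zero, add_zero]
    nlinarith [n2v_nonneg v, n2v_nonneg (Cᴴ.mulVec v)]
  have hdet := isUnit_det_of_dissipative hε hdiss
  exact ⟨hdet, n2v_inv_le hdet (n2v_mulVec_ge hε hdiss)⟩

lemma ofReal_mul_im (r : ℝ) (w : ℂ) : ((r : ℂ) * w).im = r * w.im := by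
  simp [Complex.mul_im]

lemma im_z_conj_c (z w : ℂ) : (z * (starRingEnd ℂ) (-z * w)).im = Complex.normSq z * w.im := by
  have h1 : z * (starRingEnd ℂ) (-z * w)
      = -(((Complex.normSq z : ℝ) : ℂ) * (starRingEnd ℂ) w) := by
    rw [_root_.map_mul, map_neg]
    rw [show z * (-(starRingEnd ℂ) z * (starRingEnd ℂ) w)
        = -((z * (starRingEnd ℂ) z) * (starRingEnd ℂ) w) by ring, Complex.mul_conj]
  rw [h1, Complex.neg_im, ofReal_mul_im, Complex.conj_im]
  ring

lemma im_z_conj_d (z w : ℂ) :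
    (z * (starRingEnd ℂ) w⁻¹).im = (z * w).im / Complex.normSq w := by
  have h1 : (starRingEnd ℂ) w⁻¹ = w * (((Complex.normSq w)⁻¹ : ℝ) : ℂ) := by
    rw [Complex.inv_def, _root_.map_mul, Complex.conj_conj, Complex.conj_ofReal]
  rw [h1, show z * (w * (((Complex.normSq w)⁻¹ : ℝ) : ℂ))
      = (((Complex.normSq w)⁻¹ : ℝ) : ℂ) * (z * w) by ring, ofReal_mul_im]
  rw [div_eq_inv_mul]

lemma abs_exp_2pi (k : ℤ) (u : ℝ) :
    ‖Complex.exp (2 * Real.pi * Complex.I * (k : ℂ) * (u : ℂ))‖ = 1 := by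
  rw [Complex.norm_exp]
  have : (2 * (Real.pi : ℂ) * Complex.I * (k : ℂ) * (u : ℂ)).re = 0 := by
    simp [Complex.mul_re, Complex.mul_im]
  rw [this, Real.exp_zero]

lemma conv_integrable {bγ : ℝ → ℝ} (hbγc : Continuous bγ) {g : ℝ}
    (hbound : ∀ x, |bγ x| ≤ g) {ψ : ℝ → ℂ}
    (hψ : IntegrableOn ψ (Set.Icc (0:ℝ) 1) volume) {s : ℝ → ℝ} (hs : Continuous s) :
    IntegrableOn (fun u => (bγ (s u) : ℂ) * ψ u) (Set.Ioc (0:ℝ) 1) volume := by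
  refine MeasureTheory.Integrable.bdd_mul (c := g) (hψ.mono_set Set.Ioc_subset_Icc_self) ?_ ?_
  · exact (Complex.continuous_ofReal.comp (hbγc.comp hs)).aestronglyMeasurable
  · exact Filter.Eventually.of_forall fun x => by simpa [Real.norm_eq_abs] using hbound (s x)

lemma conv_im_eq {bγ : ℝ → ℝ} (hbγc : Continuous bγ) {g : ℝ}
    (hbound : ∀ x, |bγ x| ≤ g) {ψ : ℝ → ℂ}
    (hψ : IntegrableOn ψ (Set.Icc (0:ℝ) 1) volume) {s : ℝ → ℝ} (hs : Continuous s) :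
    (∫ u in (0:ℝ)..1, (bγ (s u) : ℂ) * ψ u).im
      = ∫ u in (0:ℝ)..1, bγ (s u) * (ψ u).im := by
  rw [intervalIntegral.integral_of_le zero_le_one,
    intervalIntegral.integral_of_le zero_le_one]
  have h1 := integral_im (μ := volume.restrict (Set.Ioc (0:ℝ) 1))
    (conv_integrable hbγc hbound hψ hs)
  simp only [RCLike.im_to_complex] at h1
  rw [← h1]
  refine MeasureTheory.integral_congr_ae (Filter.Eventually.of_forall fun u => ?_)
  simp [Complex.mul_im]

lemma conv_im_nonneg {bγ : ℝ → ℝ} (hbγc : Continuous bγ) {g : ℝ}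
    (hbound : ∀ x, |bγ x| ≤ g) (hbγ0 : ∀ x, 0 ≤ bγ x) {ψ : ℝ → ℂ}
    (hψ : IntegrableOn ψ (Set.Icc (0:ℝ) 1) volume) {s : ℝ → ℝ} (hs : Continuous s)
    (hc : ∀ u ∈ Set.Icc (0:ℝ) 1, 0 ≤ (ψ u).im) :
    0 ≤ (∫ u in (0:ℝ)..1, (bγ (s u) : ℂ) * ψ u).im := by
  rw [conv_im_eq hbγc hbound hψ hs]
  refine intervalIntegral.integral_nonneg zero_le_one fun u hu => ?_
  exact mul_nonneg (hbγ0 _) (hc u hu)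

lemma conv_im_ge {bγ : ℝ → ℝ} (hbγc : Continuous bγ) {g : ℝ}
    (hbound : ∀ x, |bγ x| ≤ g) (hbγ0 : ∀ x, 0 ≤ bγ x) {ψ : ℝ → ℂ}
    (hψ : IntegrableOn ψ (Set.Icc (0:ℝ) 1) volume) {s : ℝ → ℝ} (hs : Continuous s)
    {c : ℝ} (hc : ∀ u ∈ Set.Icc (0:ℝ) 1, c ≤ (ψ u).im)
    (h1 : (∫ u in (0:ℝ)..1, bγ (s u)) = 1) :
    c ≤ (∫ u in (0:ℝ)..1, (bγ (s u) : ℂ) * ψ u).im := by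
  rw [conv_im_eq hbγc hbound hψ hs]
  have h2 : c = ∫ u in (0:ℝ)..1, c * bγ (s u) := by
    rw [intervalIntegral.integral_const_mul, h1, mul_one]
  rw [h2]
  refine intervalIntegral.integral_mono_on zero_le_one ?_ ?_ fun u hu => ?_
  · exact (continuous_const.mul (hbγc.comp hs)).intervalIntegrable 0 1
  · rw [intervalIntegrable_iff_integrableOn_Ioc_of_le zero_le_one]
    refine ((conv_integrable hbγc hbound hψ hs).im).congr
      (Filter.Eventually.of_forall fun u => ?_)
    simp [Complex.mul_im]
  · rw [mul_comm]
    exact mul_le_mul_of_nonneg_left (hc u hu) (hbγ0 _)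

lemma conv_abs_le {bγ : ℝ → ℝ} {g : ℝ}
    (hbound : ∀ x, |bγ x| ≤ g) {ψ : ℝ → ℂ} {s : ℝ → ℝ}
    {K : ℝ} (hK : ∀ u ∈ Set.Icc (0:ℝ) 1, ‖ψ u‖ ≤ K) :
    ‖∫ u in (0:ℝ)..1, (bγ (s u) : ℂ) * ψ u‖ ≤ g * K := by
  have h := intervalIntegral.norm_integral_le_of_norm_le_const
    (C := g * K) (f := fun u => (bγ (s u) : ℂ) * ψ u) (a := 0) (b := 1) ?_
  · simpa using h
  · intro x hx
    rw [Set.uIoc_of_le zero_le_one] at hx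
    have hx' : x ∈ Set.Icc (0:ℝ) 1 := Set.Ioc_subset_Icc_self hx
    have heq : ‖(bγ (s x) : ℂ) * ψ x‖ = |bγ (s x)| * ‖ψ x‖ := by
      simp [Real.norm_eq_abs]
    rw [heq]
    exact mul_le_mul (hbound _) (hK x hx') (norm_nonneg _)
      ((abs_nonneg (bγ (s x))).trans (hbound (s x)))

lemma conv_mul_scalar (bγ : ℝ → ℝ) (ψ : ℝ → ℂ) (s : ℝ → ℝ) (z : ℂ) :
    (∫ u in (0:ℝ)..1, (bγ (s u) : ℂ) * (z * ψ u))
      = z * ∫ u in (0:ℝ)..1, (bγ (s u) : ℂ) * ψ u := by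
  rw [← intervalIntegral.integral_const_mul]
  refine intervalIntegral.integral_congr fun u _ => ?_
  ring

lemma bγ_integral_eq_one {γ : ℤ → ℝ} (hγsum : Summable fun k : ℤ => |γ k|) (hγ0 : γ 0 = 1)
    {bγ : ℝ → ℝ}
    (hbγ : ∀ f : ℝ, (bγ f : ℂ)
      = ∑' k : ℤ, (γ k : ℂ) * Complex.exp (2 * Real.pi * Complex.I * (k : ℂ) * (f : ℂ))) :
    (∫ u in (0:ℝ)..1, bγ u) = 1 := by
  have key : (∫ u in Set.Ioc (0:ℝ) 1, (bγ u : ℂ)) = 1 := by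
    have hrw : (∫ u in Set.Ioc (0:ℝ) 1, (bγ u : ℂ))
        = ∫ u in Set.Ioc (0:ℝ) 1,
            ∑' k : ℤ, (γ k : ℂ) * Complex.exp (2 * Real.pi * Complex.I * (k : ℂ) * (u : ℂ)) :=
      MeasureTheory.integral_congr_ae (Filter.Eventually.of_forall fun u => hbγ u)
    rw [hrw]
    rw [MeasureTheory.integral_tsum ?hmeas ?hsum]
    case hmeas =>
      intro k
      exact (continuous_const.mul (Complex.continuous_exp.comp
        (continuous_const.mul Complex.continuous_ofReal))).aestronglyMeasurable
    case hsum =>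
      have hnn : ∀ (k : ℤ) (u : ℝ),
          ‖(γ k : ℂ) * Complex.exp (2 * Real.pi * Complex.I * (k : ℂ) * (u : ℂ))‖₊
            = ‖γ k‖₊ := by
        intro k u
        have hnorm : ‖(γ k : ℂ) * Complex.exp (2 * Real.pi * Complex.I * (k : ℂ) * (u : ℂ))‖
            = ‖γ k‖ := by
          rw [norm_mul]
          simp [abs_exp_2pi k u, Real.norm_eq_abs]
        ext
        simpa [coe_nnnorm] using hnorm
      have hcalc : ∀ k : ℤ, (∫⁻ u in Set.Ioc (0:ℝ) 1,
          ‖(γ k : ℂ) * Complex.exp (2 * Real.pi * Complex.I * (k : ℂ) * (u : ℂ))‖₊)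
            = (‖γ k‖₊ : ENNReal) := by
        intro k
        simp only [hnn k]
        rw [MeasureTheory.lintegral_const]
        simp [Real.volume_Ioc]
      simp only [enorm_eq_nnnorm, hcalc]
      rw [ENNReal.tsum_coe_ne_top_iff_summable]
      refine NNReal.summable_coe.mp ?_
      simpa [coe_nnnorm, Real.norm_eq_abs] using hγsum
    have hterm : ∀ k : ℤ, k ≠ 0 → (∫ u in Set.Ioc (0:ℝ) 1,
        (γ k : ℂ) * Complex.exp (2 * Real.pi * Complex.I * (k : ℂ) * (u : ℂ))) = 0 := by
      intro k hk
      rw [MeasureTheory.integral_const_mul]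
      have hc : (2 * (Real.pi : ℂ) * Complex.I * (k : ℂ)) ≠ 0 := by
        refine mul_ne_zero (mul_ne_zero (mul_ne_zero two_ne_zero ?_) Complex.I_ne_zero) ?_
        · exact_mod_cast Real.pi_ne_zero
        · exact_mod_cast hk
      have hint : (∫ u in Set.Ioc (0:ℝ) 1,
          Complex.exp (2 * Real.pi * Complex.I * (k : ℂ) * (u : ℂ))) = 0 := by
        rw [← intervalIntegral.integral_of_le zero_le_one]
        rw [integral_exp_mul_complex hc]
        have h1 : (2 * (Real.pi : ℂ) * Complex.I * (k : ℂ)) * ((1:ℝ) : ℂ)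
            = (k : ℂ) * (2 * Real.pi * Complex.I) := by push_cast; ring
        have h0 : (2 * (Real.pi : ℂ) * Complex.I * (k : ℂ)) * ((0:ℝ) : ℂ) = 0 := by
          push_cast; ring
        rw [h1, h0, Complex.exp_int_mul_two_pi_mul_I, Complex.exp_zero, sub_self, zero_div]
      rw [hint, mul_zero]
    rw [tsum_eq_single 0 hterm]
    have hz : ∀ u : ℝ, (γ (0:ℤ) : ℂ)
        * Complex.exp (2 * Real.pi * Complex.I * ((0:ℤ) : ℂ) * (u : ℂ)) = 1 := by
      intro u
      simp [hγ0]
    simp only [hz]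
    simp [Real.volume_Ioc]
  have h2 : (∫ u in Set.Ioc (0:ℝ) 1, (bγ u : ℂ)) = ((∫ u in Set.Ioc (0:ℝ) 1, bγ u : ℝ) : ℂ) :=
    integral_ofReal
  rw [h2] at key
  have h3 : (∫ u in Set.Ioc (0:ℝ) 1, bγ u) = 1 := by exact_mod_cast key
  rw [intervalIntegral.integral_of_le zero_le_one]
  exact h3

lemma bγ_shift_integral {bγ : ℝ → ℝ} (hper : Function.Periodic bγ 1)
    (h1 : (∫ u in (0:ℝ)..1, bγ u) = 1) (f : ℝ) :
    (∫ u in (0:ℝ)..1, bγ (u - f)) = 1 := by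
  rw [intervalIntegral.integral_comp_sub_right (fun x => bγ x) f]
  have h2 : (∫ x in (0:ℝ)-f..1-f, bγ x) = ∫ x in (-f)..(-f)+1, bγ x := by
    norm_num
    ring_nf
  rw [h2, hper.intervalIntegral_add_eq (-f) 0]
  simpa using h1

end BornesAux

open BornesAux in
set_option maxHeartbeats 2000000 in
theorem bornes_lemma
    (N T L : ℕ) (hN : 0 < N) (hT : 0 < T) (hL : 0 < L)
    (σ2 : ℝ) (hσ : 0 < σ2)
    (γ : ℤ → ℝ) (hγsum : Summable fun k : ℤ => |γ k|) (hγ0 : γ 0 = 1)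
    (bγ : ℝ → ℝ)
    (hbγ : ∀ f : ℝ, (bγ f : ℂ)
      = ∑' k : ℤ, (γ k : ℂ) * Complex.exp (2 * Real.pi * Complex.I * (k : ℂ) * (f : ℂ)))
    (hbγc : Continuous bγ) (hbγnn : ∀ f, 0 ≤ bγ f) (hbγper : Function.Periodic bγ 1)
    (A : ℤ → Matrix (Fin N) (Fin T) ℂ)
    (z : ℂ) (hz : 0 < z.im) (φ φt : ℝ → ℂ)
    (hadm : IsAdmissible N T L σ2 bγ A z φ φt) :
    (∀ f ∈ Set.Icc (0:ℝ) 1,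
      0 < (φ f).im ∧ 0 < F1 N T L σ2 bγ A φ φt z f) ∧
    ∃ C > (0:ℝ), ∃ C' > (0:ℝ), ∀ f ∈ Set.Icc (0:ℝ) 1,
      0 < (z * φt f).im ∧ (z * φt f).im < C ∧
      C' * (((fA N T L A f)ᴴ * fA N T L A f).trace.re)
        ≤ F2 N T L σ2 bγ A φ φt z f := by
  classical
  obtain ⟨hφI, hφtI, hsgn, heq⟩ := hadm
  have hz0 : z ≠ 0 := fun h => by rw [h] at hz; simp at hz
  have hzabs : 0 < ‖z‖ := norm_pos_iff.mpr hz0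
  have hT0 : (0:ℝ) < T := by exact_mod_cast hT
  have hN0 : (0:ℝ) < N := by exact_mod_cast hN
  -- the ℓ¹ bound on bγ
  have hg0 : 0 ≤ ∑' k : ℤ, |γ k| := tsum_nonneg fun k => abs_nonneg _
  have hfn : ∀ x : ℝ, (fun k : ℤ =>
      ‖(γ k : ℂ) * Complex.exp (2 * Real.pi * Complex.I * (k : ℂ) * (x : ℂ))‖)
      = fun k : ℤ => |γ k| := by
    intro x; funext k
    rw [norm_mul, Complex.norm_real, Real.norm_eq_abs,
      abs_exp_2pi k x, mul_one]
  have hbound : ∀ x : ℝ, |bγ x| ≤ ∑' k : ℤ, |γ k| := by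
    intro x
    have hsum2 : Summable fun k : ℤ =>
        ‖(γ k : ℂ) * Complex.exp (2 * Real.pi * Complex.I * (k : ℂ) * (x : ℂ))‖ := by
      rw [hfn x]; exact hγsum
    have h1 : ‖(bγ x : ℂ)‖ ≤ ∑' k : ℤ,
        ‖(γ k : ℂ) * Complex.exp (2 * Real.pi * Complex.I * (k : ℂ) * (x : ℂ))‖ := by
      rw [hbγ x]; exact norm_tsum_le_tsum_norm hsum2
    rw [Complex.norm_real, Real.norm_eq_abs] at h1
    calc |bγ x| ≤ ∑' k : ℤ,
          ‖(γ k : ℂ) * Complex.exp (2 * Real.pi * Complex.I * (k : ℂ) * (x : ℂ))‖ := h1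
      _ = ∑' k : ℤ, |γ k| := by rw [hfn x]
  -- sign facts on convolutions
  have hsgn1 : ∀ u ∈ Set.Icc (0:ℝ) 1, 0 ≤ (φ u).im := fun u hu => (hsgn u hu).1
  have hsgn2 : ∀ u ∈ Set.Icc (0:ℝ) 1, 0 ≤ (φt u).im := fun u hu => (hsgn u hu).2.1
  have hsgn3 : ∀ u ∈ Set.Icc (0:ℝ) 1, 0 ≤ (z * φ u).im := fun u hu => (hsgn u hu).2.2.1
  have hsgn4 : ∀ u ∈ Set.Icc (0:ℝ) 1, 0 ≤ (z * φt u).im := fun u hu => (hsgn u hu).2.2.2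
  have hcM : Continuous fun u : ℝ => u - (0:ℝ) := continuous_id.sub continuous_const
  have hconvM_im0 : ∀ f : ℝ, 0 ≤ (convM bγ φ f).im := fun f =>
    conv_im_nonneg hbγc hbound hbγnn hφI (continuous_id.sub continuous_const) hsgn1
  have hconvP_im0 : ∀ f : ℝ, 0 ≤ (convP bγ φt f).im := fun f =>
    conv_im_nonneg hbγc hbound hbγnn hφtI (continuous_const.sub continuous_id) hsgn2
  have hscalM : ∀ f : ℝ, (∫ u in (0:ℝ)..1, (bγ (u - f) : ℂ) * (z * φ u))
      = z * convM bγ φ f := fun f => by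
    simp only [convM]
    rw [← intervalIntegral.integral_const_mul]
    exact intervalIntegral.integral_congr fun u _ => by ring
  have hscalP : ∀ f : ℝ, (∫ u in (0:ℝ)..1, (bγ (f - u) : ℂ) * (z * φt u))
      = z * convP bγ φt f := fun f => by
    simp only [convP]
    rw [← intervalIntegral.integral_const_mul]
    exact intervalIntegral.integral_congr fun u _ => by ring
  have hconvMz_im0 : ∀ f : ℝ, 0 ≤ (z * convM bγ φ f).im := fun f => by
    rw [← hscalM f]
    exact conv_im_nonneg hbγc hbound hbγnn (hφI.const_mul z)
      (continuous_id.sub continuous_const) hsgn3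
  have hconvPz_im0 : ∀ f : ℝ, 0 ≤ (z * convP bγ φt f).im := fun f => by
    rw [← hscalP f]
    exact conv_im_nonneg hbγc hbound hbγnn (hφtI.const_mul z)
      (continuous_const.sub continuous_id) hsgn4
  -- scalar coefficient facts
  have hzm_im : ∀ f : ℝ, z.im ≤ (z * (1 + (σ2:ℂ) * convM bγ φ f)).im := fun f => by
    have h0 := hconvMz_im0 f
    rw [show z * (1 + (σ2:ℂ) * convM bγ φ f) = z + (σ2:ℂ) * (z * convM bγ φ f) by ring,
      Complex.add_im, ofReal_mul_im]
    nlinarith [hσ.le]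
  have hzt_im : ∀ f : ℝ, z.im ≤ (z * (1 + (σ2:ℂ) * convP bγ φt f)).im := fun f => by
    have h0 := hconvPz_im0 f
    rw [show z * (1 + (σ2:ℂ) * convP bγ φt f) = z + (σ2:ℂ) * (z * convP bγ φt f) by ring,
      Complex.add_im, ofReal_mul_im]
    nlinarith [hσ.le]
  have hc1 : ∀ f : ℝ, (-z * (1 + (σ2:ℂ) * convP bγ φt f)).im ≤ -z.im := fun f => by
    rw [neg_mul, Complex.neg_im]
    linarith [hzt_im f]
  have hc2 : ∀ f : ℝ, (-z * (1 + (σ2:ℂ) * convM bγ φ f)).im ≤ -z.im := fun f => by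
    rw [neg_mul, Complex.neg_im]
    linarith [hzm_im f]
  have him1 : ∀ f : ℝ, (1 + (σ2:ℂ) * convM bγ φ f).im = σ2 * (convM bγ φ f).im := fun f => by
    rw [Complex.add_im, Complex.one_im, ofReal_mul_im, zero_add]
  have him2 : ∀ f : ℝ, (1 + (σ2:ℂ) * convP bγ φt f).im = σ2 * (convP bγ φt f).im := fun f => by
    rw [Complex.add_im, Complex.one_im, ofReal_mul_im, zero_add]
  have hd1 : ∀ f : ℝ, ((1 + (σ2:ℂ) * convM bγ φ f)⁻¹).im ≤ 0 := fun f => by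
    rw [Complex.inv_im]
    have h1 : 0 ≤ (1 + (σ2:ℂ) * convM bγ φ f).im := by
      rw [him1 f]; exact mul_nonneg hσ.le (hconvM_im0 f)
    exact div_nonpos_iff.mpr (Or.inr ⟨by linarith, Complex.normSq_nonneg _⟩)
  have hd2 : ∀ f : ℝ, ((1 + (σ2:ℂ) * convP bγ φt f)⁻¹).im ≤ 0 := fun f => by
    rw [Complex.inv_im]
    have h1 : 0 ≤ (1 + (σ2:ℂ) * convP bγ φt f).im := by
      rw [him2 f]; exact mul_nonneg hσ.le (hconvP_im0 f)
    exact div_nonpos_iff.mpr (Or.inr ⟨by linarith, Complex.normSq_nonneg _⟩)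
  have h1m_abs : ∀ f : ℝ, z.im / ‖z‖
      ≤ ‖1 + (σ2:ℂ) * convM bγ φ f‖ := fun f => by
    have h2 : z.im ≤ ‖z‖ * ‖1 + (σ2:ℂ) * convM bγ φ f‖ := by
      have h3 := (hzm_im f).trans (Complex.im_le_norm _)
      rwa [norm_mul] at h3
    rw [div_le_iff₀ hzabs]
    linarith [h2, mul_comm (‖z‖) (‖1 + (σ2:ℂ) * convM bγ φ f‖)]
  have h1p_abs : ∀ f : ℝ, z.im / ‖z‖
      ≤ ‖1 + (σ2:ℂ) * convP bγ φt f‖ := fun f => by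
    have h2 : z.im ≤ ‖z‖ * ‖1 + (σ2:ℂ) * convP bγ φt f‖ := by
      have h3 := (hzt_im f).trans (Complex.im_le_norm _)
      rwa [norm_mul] at h3
    rw [div_le_iff₀ hzabs]
    linarith [h2, mul_comm (‖z‖) (‖1 + (σ2:ℂ) * convP bγ φt f‖)]
  have hzdivpos : 0 < z.im / ‖z‖ := div_pos hz hzabs
  -- invertibility and resolvent bounds
  have hSmas : ∀ f : ℝ,
      IsUnit ((-z * (1 + (σ2:ℂ) * convP bγ φt f)) • (1 : Matrix (Fin N) (Fin N) ℂ)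
        + (1 + (σ2:ℂ) * convM bγ φ f)⁻¹ • (fA N T L A f * (fA N T L A f)ᴴ)).det
      ∧ ∀ w, z.im ^ 2 * n2v (((-z * (1 + (σ2:ℂ) * convP bγ φt f)) • (1 : Matrix (Fin N) (Fin N) ℂ)
        + (1 + (σ2:ℂ) * convM bγ φ f)⁻¹ • (fA N T L A f * (fA N T L A f)ᴴ))⁻¹.mulVec w)
          ≤ n2v w := fun f =>
    master hz (hc1 f) (hd1 f)
  have hStmasC : ∀ f : ℝ,
      IsUnit ((-z * (1 + (σ2:ℂ) * convM bγ φ f)) • (1 : Matrix (Fin T) (Fin T) ℂ)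
        + (1 + (σ2:ℂ) * convP bγ φt f)⁻¹ • ((fA N T L A f)ᴴ * ((fA N T L A f)ᴴ)ᴴ)).det
      ∧ ∀ w, z.im ^ 2 * n2v (((-z * (1 + (σ2:ℂ) * convM bγ φ f)) • (1 : Matrix (Fin T) (Fin T) ℂ)
        + (1 + (σ2:ℂ) * convP bγ φt f)⁻¹
          • ((fA N T L A f)ᴴ * ((fA N T L A f)ᴴ)ᴴ))⁻¹.mulVec w)
          ≤ n2v w := fun f =>
    master hz (hc2 f) (hd2 f)
  have hStmas : ∀ f : ℝ,
      IsUnit ((-z * (1 + (σ2:ℂ) * convM bγ φ f)) • (1 : Matrix (Fin T) (Fin T) ℂ)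
        + (1 + (σ2:ℂ) * convP bγ φt f)⁻¹ • ((fA N T L A f)ᴴ * fA N T L A f)).det
      ∧ ∀ w, z.im ^ 2 * n2v (((-z * (1 + (σ2:ℂ) * convM bγ φ f)) • (1 : Matrix (Fin T) (Fin T) ℂ)
        + (1 + (σ2:ℂ) * convP bγ φt f)⁻¹ • ((fA N T L A f)ᴴ * fA N T L A f))⁻¹.mulVec w)
          ≤ n2v w := fun f => by
    have h := hStmasC f
    rwa [Matrix.conjTranspose_conjTranspose] at h
  -- bounds on traces and on φ, φt
  have hSlow : ∀ f : ℝ, ∀ w, z.im ^ 2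
      * n2v ((Smat N T L σ2 bγ A φ φt z f).mulVec w) ≤ n2v w := fun f => (hSmas f).2
  have hStlow : ∀ f : ℝ, ∀ w, z.im ^ 2
      * n2v ((StMat N T L σ2 bγ A φ φt z f).mulVec w) ≤ n2v w := fun f => (hStmas f).2
  have hφbnd : ∀ u ∈ Set.Icc (0:ℝ) 1,
      ‖φ u‖ ≤ (N:ℝ) / ((T:ℝ) * z.im) := fun u hu => by
    have htr := abs_trace_le hz (hSlow u)
    simp only [Fintype.card_fin] at htr
    rw [(heq u hu).1, norm_mul, norm_inv, Complex.norm_natCast]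
    have hre : (N:ℝ) / ((T:ℝ) * z.im) = (T:ℝ)⁻¹ * ((N:ℝ) / z.im) := by
      field_simp
    rw [hre]
    exact mul_le_mul_of_nonneg_left htr (inv_nonneg.mpr hT0.le)
  have hφtbnd : ∀ u ∈ Set.Icc (0:ℝ) 1,
      ‖φt u‖ ≤ 1 / z.im := fun u hu => by
    have htr := abs_trace_le hz (hStlow u)
    simp only [Fintype.card_fin] at htr
    rw [(heq u hu).2, norm_mul, norm_inv, Complex.norm_natCast]
    have hre : (1:ℝ) / z.im = (T:ℝ)⁻¹ * ((T:ℝ) / z.im) := by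
      field_simp
    rw [hre]
    exact mul_le_mul_of_nonneg_left htr (inv_nonneg.mpr hT0.le)
  -- bounds on the convolutions
  have hζabs : ∀ f : ℝ, ‖(σ2:ℂ) * convM bγ φ f‖
      ≤ σ2 * ((∑' k : ℤ, |γ k|) * ((N:ℝ) / ((T:ℝ) * z.im))) := fun f => by
    rw [norm_mul, Complex.norm_real, Real.norm_eq_abs, abs_of_pos hσ]
    refine mul_le_mul_of_nonneg_left ?_ hσ.le
    simp only [convM]
    exact conv_abs_le hbound hφbnd
  have hζtabs : ∀ f : ℝ, ‖(σ2:ℂ) * convP bγ φt f‖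
      ≤ σ2 * ((∑' k : ℤ, |γ k|) * (1 / z.im)) := fun f => by
    rw [norm_mul, Complex.norm_real, Real.norm_eq_abs, abs_of_pos hσ]
    refine mul_le_mul_of_nonneg_left ?_ hσ.le
    simp only [convP]
    exact conv_abs_le hbound hφtbnd
  set Z1 : ℝ := σ2 * ((∑' k : ℤ, |γ k|) * ((N:ℝ) / ((T:ℝ) * z.im))) with hZ1def
  set Z2 : ℝ := σ2 * ((∑' k : ℤ, |γ k|) * (1 / z.im)) with hZ2def
  have hZ1nn : 0 ≤ Z1 := by
    rw [hZ1def]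
    exact mul_nonneg hσ.le (mul_nonneg hg0 (div_nonneg hN0.le (mul_nonneg hT0.le hz.le)))
  have hZ2nn : 0 ≤ Z2 := by
    rw [hZ2def]
    exact mul_nonneg hσ.le (mul_nonneg hg0 (div_nonneg zero_le_one hz.le))
  have habs1m : ∀ f : ℝ, ‖1 + (σ2:ℂ) * convM bγ φ f‖ ≤ 1 + Z1 := fun f => by
    calc ‖1 + (σ2:ℂ) * convM bγ φ f‖
        ≤ ‖(1:ℂ)‖ + ‖(σ2:ℂ) * convM bγ φ f‖ := norm_add_le _ _
      _ ≤ 1 + Z1 := by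
          rw [norm_one]
          linarith [hζabs f]
  have habs1p : ∀ f : ℝ, ‖1 + (σ2:ℂ) * convP bγ φt f‖ ≤ 1 + Z2 := fun f => by
    calc ‖1 + (σ2:ℂ) * convP bγ φt f‖
        ≤ ‖(1:ℂ)‖ + ‖(σ2:ℂ) * convP bγ φt f‖ := norm_add_le _ _
      _ ≤ 1 + Z2 := by
          rw [norm_one]
          linarith [hζtabs f]
  -- entrywise norm of fA
  set a : ℝ := ∑ k ∈ Finset.Icc (-(L:ℤ)) (L:ℤ), e1 (A k) with hadef
  have ha0 : 0 ≤ a := by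
    rw [hadef]; exact Finset.sum_nonneg fun k _ => e1_nonneg _
  have hfAe1 : ∀ f : ℝ, e1 (fA N T L A f) ≤ a := fun f => by
    rw [hadef]
    simp only [fA]
    refine (e1_sum_le _ _).trans ?_
    refine Finset.sum_le_sum fun k _ => ?_
    rw [e1_smul, abs_exp_2pi, one_mul]
  have hGe1 : ∀ f : ℝ, e1 (fA N T L A f * (fA N T L A f)ᴴ) ≤ a ^ 2 := fun f => by
    refine (e1_mul_le _ _).trans ?_
    rw [e1_conjTranspose, sq]
    exact mul_le_mul (hfAe1 f) (hfAe1 f) (e1_nonneg _) ha0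
  have hGte1 : ∀ f : ℝ, e1 ((fA N T L A f)ᴴ * fA N T L A f) ≤ a ^ 2 := fun f => by
    refine (e1_mul_le _ _).trans ?_
    rw [e1_conjTranspose, sq]
    exact mul_le_mul (hfAe1 f) (hfAe1 f) (e1_nonneg _) ha0
  set B : ℝ := ‖z‖ * (1 + Z1 + Z2) * ((N:ℝ) + (T:ℝ))
      + ‖z‖ / z.im * a ^ 2 + 1 with hBdef
  have hBterm1 : 0 ≤ ‖z‖ * (1 + Z1 + Z2) * ((N:ℝ) + (T:ℝ)) :=
    mul_nonneg (mul_nonneg (norm_nonneg z) (by linarith)) (by positivity)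
  have hBterm2 : 0 ≤ ‖z‖ / z.im * a ^ 2 :=
    mul_nonneg (div_nonneg (norm_nonneg z) hz.le) (sq_nonneg a)
  have hB1 : 1 ≤ B := by rw [hBdef]; linarith
  have hBpos : 0 < B := lt_of_lt_of_le one_pos hB1
  have hdinv_m : ∀ f : ℝ, ‖(1 + (σ2:ℂ) * convM bγ φ f)⁻¹‖
      ≤ ‖z‖ / z.im := fun f => by
    rw [norm_inv, show ‖z‖ / z.im = (z.im / ‖z‖)⁻¹ by rw [inv_div]]
    exact inv_anti₀ hzdivpos (h1m_abs f)
  have hdinv_p : ∀ f : ℝ, ‖(1 + (σ2:ℂ) * convP bγ φt f)⁻¹‖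
      ≤ ‖z‖ / z.im := fun f => by
    rw [norm_inv, show ‖z‖ / z.im = (z.im / ‖z‖)⁻¹ by rw [inv_div]]
    exact inv_anti₀ hzdivpos (h1p_abs f)
  have hMe1 : ∀ f : ℝ,
      e1 ((-z * (1 + (σ2:ℂ) * convP bγ φt f)) • (1 : Matrix (Fin N) (Fin N) ℂ)
        + (1 + (σ2:ℂ) * convM bγ φ f)⁻¹ • (fA N T L A f * (fA N T L A f)ᴴ)) ≤ B := fun f => by
    refine (e1_add_le _ _).trans ?_
    rw [e1_smul, e1_smul, e1_one]
    simp only [Fintype.card_fin]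
    have h1 : ‖-z * (1 + (σ2:ℂ) * convP bγ φt f)‖
        ≤ ‖z‖ * (1 + Z2) := by
      rw [neg_mul, norm_neg, norm_mul]
      exact mul_le_mul_of_nonneg_left (habs1p f) (norm_nonneg z)
    have h2 := hdinv_m f
    have h3 := hGe1 f
    have h4 : ‖-z * (1 + (σ2:ℂ) * convP bγ φt f)‖ * (N:ℝ)
        ≤ ‖z‖ * (1 + Z2) * (N:ℝ) := mul_le_mul_of_nonneg_right h1 hN0.le
    have h5 : ‖(1 + (σ2:ℂ) * convM bγ φ f)⁻¹‖
          * e1 (fA N T L A f * (fA N T L A f)ᴴ)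
        ≤ ‖z‖ / z.im * a ^ 2 :=
      mul_le_mul h2 h3 (e1_nonneg _) (div_nonneg (norm_nonneg z) hz.le)
    have h6 : ‖z‖ * (1 + Z2) * (N:ℝ)
        ≤ ‖z‖ * (1 + Z1 + Z2) * ((N:ℝ) + (T:ℝ)) := by
      refine mul_le_mul ?_ (by linarith) hN0.le
        (mul_nonneg (norm_nonneg z) (by linarith))
      exact mul_le_mul_of_nonneg_left (by linarith) (norm_nonneg z)
    rw [hBdef]
    linarith
  have hMte1 : ∀ f : ℝ,
      e1 ((-z * (1 + (σ2:ℂ) * convM bγ φ f)) • (1 : Matrix (Fin T) (Fin T) ℂ)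
        + (1 + (σ2:ℂ) * convP bγ φt f)⁻¹ • ((fA N T L A f)ᴴ * fA N T L A f)) ≤ B := fun f => by
    refine (e1_add_le _ _).trans ?_
    rw [e1_smul, e1_smul, e1_one]
    simp only [Fintype.card_fin]
    have h1 : ‖-z * (1 + (σ2:ℂ) * convM bγ φ f)‖
        ≤ ‖z‖ * (1 + Z1) := by
      rw [neg_mul, norm_neg, norm_mul]
      exact mul_le_mul_of_nonneg_left (habs1m f) (norm_nonneg z)
    have h2 := hdinv_p f
    have h3 := hGte1 f
    have h4 : ‖-z * (1 + (σ2:ℂ) * convM bγ φ f)‖ * (T:ℝ)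
        ≤ ‖z‖ * (1 + Z1) * (T:ℝ) := mul_le_mul_of_nonneg_right h1 hT0.le
    have h5 : ‖(1 + (σ2:ℂ) * convP bγ φt f)⁻¹‖
          * e1 ((fA N T L A f)ᴴ * fA N T L A f)
        ≤ ‖z‖ / z.im * a ^ 2 :=
      mul_le_mul h2 h3 (e1_nonneg _) (div_nonneg (norm_nonneg z) hz.le)
    have h6 : ‖z‖ * (1 + Z1) * (T:ℝ)
        ≤ ‖z‖ * (1 + Z1 + Z2) * ((N:ℝ) + (T:ℝ)) := by
      refine mul_le_mul ?_ (by linarith) hT0.le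
        (mul_nonneg (norm_nonneg z) (by linarith))
      exact mul_le_mul_of_nonneg_left (by linarith) (norm_nonneg z)
    rw [hBdef]
    linarith
  -- quantitative lower bounds on the resolvents
  have hSup : ∀ f : ℝ, ∀ w,
      n2v w ≤ B ^ 2 * n2v ((Smat N T L σ2 bγ A φ φt z f).mulVec w) := fun f w => by
    refine n2v_inv_ge (hSmas f).1 (fun v => ?_) w
    refine (n2v_mulVec_le _ _).trans ?_
    exact mul_le_mul_of_nonneg_right
      (pow_le_pow_left₀ (e1_nonneg _) (hMe1 f) 2) (n2v_nonneg v)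
  have hStup : ∀ f : ℝ, ∀ w,
      n2v w ≤ B ^ 2 * n2v ((StMat N T L σ2 bγ A φ φt z f).mulVec w) := fun f w => by
    refine n2v_inv_ge (hStmas f).1 (fun v => ?_) w
    refine (n2v_mulVec_le _ _).trans ?_
    exact mul_le_mul_of_nonneg_right
      (pow_le_pow_left₀ (e1_nonneg _) (hMte1 f) 2) (n2v_nonneg v)
  have hfr2S : ∀ f : ℝ, (N:ℝ) ≤ B ^ 2 * fr2 (Smat N T L σ2 bγ A φ φt z f) := fun f => by
    have h := card_le_fr2_inv (M := (-z * (1 + (σ2:ℂ) * convP bγ φt f))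
        • (1 : Matrix (Fin N) (Fin N) ℂ)
      + (1 + (σ2:ℂ) * convM bγ φ f)⁻¹ • (fA N T L A f * (fA N T L A f)ᴴ)) (hSup f)
    simp only [Fintype.card_fin] at h
    exact h
  have hfr2St : ∀ f : ℝ, (T:ℝ) ≤ B ^ 2 * fr2 (StMat N T L σ2 bγ A φ φt z f) := fun f => by
    have h := card_le_fr2_inv (M := (-z * (1 + (σ2:ℂ) * convM bγ φ f))
        • (1 : Matrix (Fin T) (Fin T) ℂ)
      + (1 + (σ2:ℂ) * convP bγ φt f)⁻¹ • ((fA N T L A f)ᴴ * fA N T L A f)) (hStup f)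
    simp only [Fintype.card_fin] at h
    exact h
  have hfr2StA : ∀ f : ℝ, fr2 ((fA N T L A f)ᴴ)
      ≤ B ^ 2 * fr2 (StMat N T L σ2 bγ A φ φt z f * (fA N T L A f)ᴴ) := fun f =>
    fr2_le_fr2_inv_mul (M := (-z * (1 + (σ2:ℂ) * convM bγ φ f))
        • (1 : Matrix (Fin T) (Fin T) ℂ)
      + (1 + (σ2:ℂ) * convP bγ φt f)⁻¹ • ((fA N T L A f)ᴴ * fA N T L A f))
      (hStup f) ((fA N T L A f)ᴴ)
  have hfr2Spos : ∀ f : ℝ, 0 < fr2 (Smat N T L σ2 bγ A φ φt z f) := fun f => by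
    have h := hfr2S f
    nlinarith [sq_nonneg B, hN0]
  have hfr2Stpos : ∀ f : ℝ, 0 < fr2 (StMat N T L σ2 bγ A φ φt z f) := fun f => by
    have h := hfr2St f
    nlinarith [sq_nonneg B, hT0]
  -- the fixed point identities imply Im φ > 0
  set dphi : ℝ := z.im * (N:ℝ) / ((T:ℝ) * B ^ 2) with hdphidef
  have hdphipos : 0 < dphi := by
    rw [hdphidef]
    exact div_pos (mul_pos hz hN0) (mul_pos hT0 (pow_pos hBpos 2))
  have hkeyS : ∀ f : ℝ, ((Smat N T L σ2 bγ A φ φt z f).trace).im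
      = ((starRingEnd ℂ) (-z * (1 + (σ2:ℂ) * convP bγ φt f))).im
          * fr2 (Smat N T L σ2 bγ A φ φt z f)
        + ((starRingEnd ℂ) ((1 + (σ2:ℂ) * convM bγ φ f)⁻¹)).im
          * fr2 (Smat N T L σ2 bγ A φ φt z f * fA N T L A f) := fun f => by
    have h := key_im (1:ℂ) (-z * (1 + (σ2:ℂ) * convP bγ φt f))
      ((1 + (σ2:ℂ) * convM bγ φ f)⁻¹) (fA N T L A f) (hSmas f).1
    simp only [one_mul] at h
    exact h
  have htrim : ∀ f : ℝ, z.im * fr2 (Smat N T L σ2 bγ A φ φt z f)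
      ≤ ((Smat N T L σ2 bγ A φ φt z f).trace).im := fun f => by
    rw [hkeyS f]
    have t1 : z.im ≤ ((starRingEnd ℂ) (-z * (1 + (σ2:ℂ) * convP bγ φt f))).im := by
      rw [Complex.conj_im]; linarith [hc1 f]
    have t2 : 0 ≤ ((starRingEnd ℂ) ((1 + (σ2:ℂ) * convM bγ φ f)⁻¹)).im := by
      rw [Complex.conj_im]; linarith [hd1 f]
    have t3 := fr2_nonneg (Smat N T L σ2 bγ A φ φt z f)
    have t4 := fr2_nonneg (Smat N T L σ2 bγ A φ φt z f * fA N T L A f)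
    nlinarith
  have hφim_eq : ∀ u ∈ Set.Icc (0:ℝ) 1,
      (φ u).im = (T:ℝ)⁻¹ * ((Smat N T L σ2 bγ A φ φt z u).trace).im := fun u hu => by
    have h := congrArg Complex.im (heq u hu).1
    rwa [show ((T:ℕ):ℂ)⁻¹ = (((T:ℝ)⁻¹ : ℝ) : ℂ) by push_cast; ring, ofReal_mul_im] at h
  have hφtim_eq : ∀ u ∈ Set.Icc (0:ℝ) 1,
      (z * φt u).im = (T:ℝ)⁻¹ * (z * (StMat N T L σ2 bγ A φ φt z u).trace).im :=
    fun u hu => by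
    have h : z * φt u = (((T:ℝ)⁻¹ : ℝ) : ℂ)
        * (z * (StMat N T L σ2 bγ A φ φt z u).trace) := by
      rw [(heq u hu).2]; push_cast; ring
    rw [h, ofReal_mul_im]
  have hImφ : ∀ u ∈ Set.Icc (0:ℝ) 1, dphi ≤ (φ u).im := fun u hu => by
    rw [hφim_eq u hu]
    have e1' : (N:ℝ) / B ^ 2 ≤ fr2 (Smat N T L σ2 bγ A φ φt z u) := by
      rw [div_le_iff₀ (pow_pos hBpos 2)]
      linarith [hfr2S u, mul_comm (B ^ 2) (fr2 (Smat N T L σ2 bγ A φ φt z u))]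
    have e2 : z.im * ((N:ℝ) / B ^ 2) ≤ ((Smat N T L σ2 bγ A φ φt z u).trace).im :=
      le_trans (mul_le_mul_of_nonneg_left e1' hz.le) (htrim u)
    have e3 : dphi = (T:ℝ)⁻¹ * (z.im * ((N:ℝ) / B ^ 2)) := by
      rw [hdphidef]; field_simp
    rw [e3]
    exact mul_le_mul_of_nonneg_left e2 (inv_nonneg.mpr hT0.le)
  -- the integral of bγ over a period
  have hint1 : (∫ u in (0:ℝ)..1, bγ u) = 1 := bγ_integral_eq_one hγsum hγ0 hbγ
  have hshift : ∀ f : ℝ, (∫ u in (0:ℝ)..1, bγ (u - f)) = 1 := bγ_shift_integral hbγper hint1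
  have hζlow : ∀ f : ℝ, σ2 * dphi ≤ σ2 * (convM bγ φ f).im := fun f => by
    refine mul_le_mul_of_nonneg_left ?_ hσ.le
    have h := conv_im_ge hbγc hbound hbγnn hφI
      (continuous_id.sub continuous_const) hImφ (hshift f)
    exact h
  -- now assemble the conclusion
  constructor
  · intro f hf
    constructor
    · rw [hφim_eq f hf]
      have e2 : 0 < z.im * fr2 (Smat N T L σ2 bγ A φ φt z f) :=
        mul_pos hz (hfr2Spos f)
      have := htrim f
      exact mul_pos (inv_pos.mpr hT0) (by linarith)
    · simp only [F1]
      rw [trace_mul_conjTranspose, Complex.ofReal_re]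
      exact mul_pos (inv_pos.mpr hT0) (hfr2Spos f)
  · have hCpos : 0 < ‖z‖ / z.im + 1 := by
      have : 0 ≤ ‖z‖ / z.im := div_nonneg (norm_nonneg z) hz.le
      linarith
    have hC'pos : 0 < ((T:ℝ) * B ^ 2 * (1 + Z2) ^ 2)⁻¹ :=
      inv_pos.mpr (mul_pos (mul_pos hT0 (pow_pos hBpos 2))
        (pow_pos (by linarith : (0:ℝ) < 1 + Z2) 2))
    refine ⟨‖z‖ / z.im + 1, hCpos,
      ((T:ℝ) * B ^ 2 * (1 + Z2) ^ 2)⁻¹, hC'pos, fun f hf => ?_⟩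
    have hkeySt : (z * (StMat N T L σ2 bγ A φ φt z f).trace).im
        = (z * (starRingEnd ℂ) (-z * (1 + (σ2:ℂ) * convM bγ φ f))).im
            * fr2 (StMat N T L σ2 bγ A φ φt z f)
          + (z * (starRingEnd ℂ) ((1 + (σ2:ℂ) * convP bγ φt f)⁻¹)).im
            * fr2 (StMat N T L σ2 bγ A φ φt z f * (fA N T L A f)ᴴ) := by
      have h := key_im z (-z * (1 + (σ2:ℂ) * convM bγ φ f))
        ((1 + (σ2:ℂ) * convP bγ φt f)⁻¹) ((fA N T L A f)ᴴ) (hStmasC f).1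
      rw [Matrix.conjTranspose_conjTranspose] at h
      exact h
    have hP1 : 0 < (z * (starRingEnd ℂ) (-z * (1 + (σ2:ℂ) * convM bγ φ f))).im := by
      rw [im_z_conj_c, him1 f]
      have h1 : 0 < Complex.normSq z := Complex.normSq_pos.mpr hz0
      have h2 : 0 < σ2 * (convM bγ φ f).im :=
        lt_of_lt_of_le (mul_pos hσ hdphipos) (hζlow f)
      exact mul_pos h1 h2
    have hP2 : 0 ≤ (z * (starRingEnd ℂ) ((1 + (σ2:ℂ) * convP bγ φt f)⁻¹)).im := by
      rw [im_z_conj_d]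
      exact div_nonneg (by linarith [hzt_im f]) (Complex.normSq_nonneg _)
    have hzφt_pos : 0 < (z * φt f).im := by
      rw [hφtim_eq f hf, hkeySt]
      refine mul_pos (inv_pos.mpr hT0) ?_
      refine add_pos_of_pos_of_nonneg (mul_pos hP1 (hfr2Stpos f)) ?_
      exact mul_nonneg hP2 (fr2_nonneg _)
    refine ⟨hzφt_pos, ?_, ?_⟩
    · -- upper bound
      have h1 : (z * φt f).im ≤ ‖z * φt f‖ := Complex.im_le_norm _
      have h2 : ‖z * φt f‖ ≤ ‖z‖ * (1 / z.im) := by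
        rw [norm_mul]
        exact mul_le_mul_of_nonneg_left (hφtbnd f hf) (norm_nonneg z)
      have h3 : ‖z‖ * (1 / z.im) = ‖z‖ / z.im := by ring
      linarith
    · -- lower bound on F2
      simp only [F2, zetat]
      have hmat : StMat N T L σ2 bγ A φ φt z f * ((fA N T L A f)ᴴ * fA N T L A f)
            * (StMat N T L σ2 bγ A φ φt z f)ᴴ
          = (StMat N T L σ2 bγ A φ φt z f * (fA N T L A f)ᴴ)
            * (StMat N T L σ2 bγ A φ φt z f * (fA N T L A f)ᴴ)ᴴ := by
        rw [Matrix.conjTranspose_mul, Matrix.conjTranspose_conjTranspose]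
        simp only [Matrix.mul_assoc]
      rw [hmat, trace_mul_conjTranspose, Complex.ofReal_re,
        trace_conjTranspose_mul, Complex.ofReal_re]
      have hApos : 0 < ‖1 + (σ2:ℂ) * convP bγ φt f‖ :=
        lt_of_lt_of_le hzdivpos (h1p_abs f)
      have hden_pos : 0 < ‖1 + (σ2:ℂ) * convP bγ φt f‖ ^ 2 := pow_pos hApos 2
      have hden_le : ‖1 + (σ2:ℂ) * convP bγ φt f‖ ^ 2 ≤ (1 + Z2) ^ 2 :=
        pow_le_pow_left₀ (norm_nonneg _) (habs1p f) 2
      have hnum : fr2 (fA N T L A f) / B ^ 2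
          ≤ fr2 (StMat N T L σ2 bγ A φ φt z f * (fA N T L A f)ᴴ) := by
        rw [div_le_iff₀ (pow_pos hBpos 2)]
        have h := hfr2StA f
        rw [fr2_conjTranspose] at h
        linarith [mul_comm (B ^ 2)
          (fr2 (StMat N T L σ2 bγ A φ φt z f * (fA N T L A f)ᴴ))]
      rw [le_div_iff₀ hden_pos]
      have hC'nn : (0:ℝ) ≤ ((T:ℝ) * B ^ 2 * (1 + Z2) ^ 2)⁻¹ := hC'pos.le
      calc ((T:ℝ) * B ^ 2 * (1 + Z2) ^ 2)⁻¹ * fr2 (fA N T L A f)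
            * ‖1 + (σ2:ℂ) * convP bγ φt f‖ ^ 2
          ≤ ((T:ℝ) * B ^ 2 * (1 + Z2) ^ 2)⁻¹ * fr2 (fA N T L A f) * (1 + Z2) ^ 2 := by
            exact mul_le_mul_of_nonneg_left hden_le
              (mul_nonneg hC'nn (fr2_nonneg _))
        _ = (T:ℝ)⁻¹ * (fr2 (fA N T L A f) / B ^ 2) := by
            field_simp
        _ ≤ (T:ℝ)⁻¹ * fr2 (StMat N T L σ2 bγ A φ φt z f * (fA N T L A f)ᴴ) :=
            mul_le_mul_of_nonneg_left hnum (inv_nonneg.mpr hT0.le)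


end
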